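/- For all integers N ≥ 1 and d ≥ 2, the rational number 12·F_stab(d, N) is an integer, i.e. F_stab(d, N) lies in (1/12)·ℤ. Equivalently, 2·d^2 divides (N + 1)·((d - 1)^N·(d^2·N − d^2 − 2·d·N − 2) + 2·(d^2 − 1)) when N is odd, and 2·d^2 divides (N + 1)·((d - 1)^N·(d^2·N + 2·d^2 − 2·d·N − 2) − 2·(d^2 − 1)) when N is even. -/
import Mathlib


/-- The rational number `F_stab(d, N)` from the paper. -/
def Fstab (d N : ℕ) : ℚ :=
  if Odd N then
    ((N : ℚ) + 1) / (24 * (d : ℚ) ^ 2) *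
      (((d : ℚ) - 1) ^ N * ((d : ℚ) ^ 2 * N - (d : ℚ) ^ 2 - 2 * d * N - 2) +
        2 * ((d : ℚ) ^ 2 - 1))
  else
    ((N : ℚ) + 1) / (24 * (d : ℚ) ^ 2) *
      (((d : ℚ) - 1) ^ N * ((d : ℚ) ^ 2 * N + 2 * (d : ℚ) ^ 2 - 2 * d * N - 2) -
        2 * ((d : ℚ) ^ 2 - 1))

/-- Binomial expansion of `(d-1)^N` to second order. -/
lemma pow_sub_one_expand (d : ℤ) : ∀ N : ℕ, ∃ c : ℤ,
    (d - 1) ^ N = (-1) ^ N * (1 - N * d + (N.choose 2 : ℤ) * d ^ 2) + c * d ^ 3 := by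
  intro N
  induction N with
  | zero => exact ⟨0, by norm_num⟩
  | succ n ih =>
    obtain ⟨c, hc⟩ := ih
    refine ⟨(-1) ^ n * (n.choose 2 : ℤ) + c * d - c, ?_⟩
    have hch : ((n + 1).choose 2 : ℤ) = (n.choose 2 : ℤ) + n := by
      have : (n + 1).choose 2 = n.choose 1 + n.choose 2 := Nat.choose_succ_succ n 1
      rw [this, Nat.choose_one_right]
      push_cast
      ring
    rw [pow_succ, hc, hch]
    push_cast
    ring

theorem Fstab_twelve_int (N d : ℕ) (hN : 1 ≤ N) (hd : 2 ≤ d) :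
    (∃ m : ℤ, 12 * Fstab d N = (m : ℚ)) ∧
      (Odd N →
        2 * (d : ℤ) ^ 2 ∣
          ((N : ℤ) + 1) *
            (((d : ℤ) - 1) ^ N * ((d : ℤ) ^ 2 * N - (d : ℤ) ^ 2 - 2 * d * N - 2) +
              2 * ((d : ℤ) ^ 2 - 1))) ∧
      (Even N →
        2 * (d : ℤ) ^ 2 ∣
          ((N : ℤ) + 1) *
            (((d : ℤ) - 1) ^ N * ((d : ℤ) ^ 2 * N + 2 * (d : ℤ) ^ 2 - 2 * d * N - 2) -
              2 * ((d : ℤ) ^ 2 - 1))) := by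
  obtain ⟨c, hc⟩ := pow_sub_one_expand (d : ℤ) N
  set s : ℤ := (N.choose 2 : ℤ) with hs
  have hd0 : (d : ℚ) ≠ 0 := by positivity
  -- the odd-N divisibility
  have hodd : Odd N →
      2 * (d : ℤ) ^ 2 ∣
        ((N : ℤ) + 1) *
          (((d : ℤ) - 1) ^ N * ((d : ℤ) ^ 2 * N - (d : ℤ) ^ 2 - 2 * d * N - 2) +
            2 * ((d : ℤ) ^ 2 - 1)) := by
    intro ho
    obtain ⟨k, hk⟩ := ho
    have hn : (N : ℤ) = 2 * k + 1 := by exact_mod_cast hk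
    have hneg : ((-1 : ℤ)) ^ N = -1 := Odd.neg_one_pow ⟨k, hk⟩
    rw [hneg] at hc
    refine ⟨((k : ℤ) + 1) * ((3 - (N : ℤ) - 2 * N ^ 2 + 2 * s)
      + (d : ℤ) * ((N : ℤ) ^ 2 - N + 2 * s * N - 2 * c)
      + (d : ℤ) ^ 2 * (-s * N + s - 2 * c * N)
      + (d : ℤ) ^ 3 * (c * N - c)), ?_⟩
    rw [hc, hn]
    ring
  -- the even-N divisibility
  have heven : Even N →
      2 * (d : ℤ) ^ 2 ∣
        ((N : ℤ) + 1) *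
          (((d : ℤ) - 1) ^ N * ((d : ℤ) ^ 2 * N + 2 * (d : ℤ) ^ 2 - 2 * d * N - 2) -
            2 * ((d : ℤ) ^ 2 - 1)) := by
    intro he
    have hneg : ((-1 : ℤ)) ^ N = 1 := Even.neg_one_pow he
    rw [hneg, one_mul] at hc
    set K : ℤ := ((N : ℤ) + 2 * N ^ 2 - 2 * s)
      + (d : ℤ) * (-(N : ℤ) ^ 2 - 2 * N - 2 * s * N - 2 * c)
      + (d : ℤ) ^ 2 * (s * N + 2 * s - 2 * c * N)
      + (d : ℤ) ^ 3 * (c * N + 2 * c) with hK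
    have hB : (((d : ℤ) - 1) ^ N * ((d : ℤ) ^ 2 * N + 2 * (d : ℤ) ^ 2 - 2 * d * N - 2) -
        2 * ((d : ℤ) ^ 2 - 1)) = (d : ℤ) ^ 2 * K := by
      rw [hc, hK]; ring
    have hK2 : (2 : ℤ) ∣ K := by
      rcases Nat.even_or_odd d with hde | hdo
      · -- d even
        obtain ⟨e, he'⟩ := hde
        obtain ⟨k, hk⟩ := he
        have hdn : (d : ℤ) = 2 * e := by
          have : d = 2 * e := by omega
          exact_mod_cast this
        have hn : (N : ℤ) = 2 * k := by
          have : N = 2 * k := by omega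
          exact_mod_cast this
        refine ⟨((k : ℤ) + 4 * k ^ 2 - s)
          + (e : ℤ) * (-(N : ℤ) ^ 2 - 2 * N - 2 * s * N - 2 * c)
          + 2 * (e : ℤ) ^ 2 * (s * N + 2 * s - 2 * c * N)
          + 4 * (e : ℤ) ^ 3 * (c * N + 2 * c), ?_⟩
        rw [hK, hdn, hn]
        ring
      · -- d odd : B is even and d^2 is odd
        have hBe : (2 : ℤ) ∣ (d : ℤ) ^ 2 * K := by
          rw [← hB]
          have h1 : (2 : ℤ) ∣ ((d : ℤ) - 1) := by
            obtain ⟨j, hj⟩ := hdo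
            refine ⟨j, ?_⟩
            have : (d : ℤ) = 2 * j + 1 := by exact_mod_cast hj
            omega
          have h2 : (2 : ℤ) ∣ ((d : ℤ) - 1) ^ N :=
            dvd_pow h1 (by omega)
          obtain ⟨t, ht⟩ := h2
          exact ⟨t * ((d : ℤ) ^ 2 * N + 2 * (d : ℤ) ^ 2 - 2 * d * N - 2) - ((d : ℤ) ^ 2 - 1),
            by rw [ht]; ring⟩
        rcases (Int.prime_two.dvd_mul.mp hBe) with h | h
        · exfalso
          have : ¬ (2 : ℤ) ∣ (d : ℤ) ^ 2 := by
            obtain ⟨j, hj⟩ := hdo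
            have hdz : (d : ℤ) = 2 * j + 1 := by exact_mod_cast hj
            have hod : Odd ((d : ℤ)) := ⟨(j : ℤ), by rw [hdz]⟩
            have hsq : Odd ((d : ℤ) ^ 2) := hod.pow
            intro h
            exact (Int.not_even_iff_odd.mpr hsq) ((even_iff_two_dvd).mpr h)
          exact this h
        · exact h
    obtain ⟨t, ht⟩ := hK2
    exact ⟨((N : ℤ) + 1) * t, by rw [hB, ht]; ring⟩
  refine ⟨?_, hodd, heven⟩
  rcases Nat.even_or_odd N with he | ho
  · obtain ⟨m, hm⟩ := heven he
    refine ⟨m, ?_⟩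
    have hni : ¬ Odd N := Nat.not_odd_iff_even.mpr he
    rw [Fstab, if_neg hni]
    have hmq : ((N : ℚ) + 1) *
        (((d : ℚ) - 1) ^ N * ((d : ℚ) ^ 2 * N + 2 * (d : ℚ) ^ 2 - 2 * d * N - 2) -
          2 * ((d : ℚ) ^ 2 - 1)) = 2 * (d : ℚ) ^ 2 * m := by
      exact_mod_cast congrArg (fun x : ℤ => (x : ℚ)) hm
    field_simp
    linear_combination 12 * hmq
  · obtain ⟨m, hm⟩ := hodd ho
    refine ⟨m, ?_⟩
    rw [Fstab, if_pos ho]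
    have hmq : ((N : ℚ) + 1) *
        (((d : ℚ) - 1) ^ N * ((d : ℚ) ^ 2 * N - (d : ℚ) ^ 2 - 2 * d * N - 2) +
          2 * ((d : ℚ) ^ 2 - 1)) = 2 * (d : ℚ) ^ 2 * m := by
      exact_mod_cast congrArg (fun x : ℤ => (x : ℚ)) hm
    field_simp
    linear_combination 12 * hmq
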